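/- Suppose functions $A_n, B_n$ (of a complex variable $z$) and constants $\alpha_n, \beta_n$ satisfy for all $n\ge 0$ the compatibility conditions $(S_1)$: $B_{n+1}(z)+B_n(z)=(z-\alpha_n)A_n(z)-\mathrm{v}_0'(z)$ and $(S_2)$: $1+(z-\alpha_n)(B_{n+1}(z)-B_n(z))=\beta_{n+1}A_{n+1}(z)-\beta_n A_{n-1}(z)$, with $B_0(z)=0$ and $\beta_0 A_{-1}(z)=0$. Then for all $n\ge 0$: $B_n(z)^2+\mathrm{v}_0'(z)B_n(z)+\sum_{j=0}^{n-1}A_j(z)=\beta_n A_n(z)A_{n-1}(z)$ (condition $(S_2')$). -/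
import Mathlib


/-- The sum rule `(S₂')` follows from the compatibility conditions `(S₁)` and `(S₂)`. -/
theorem stmt_2 (A B : ℕ → ℂ → ℂ) (α β : ℕ → ℂ) (v0' : ℂ → ℂ)
    (hB0 : ∀ z, B 0 z = 0) (hβ0 : β 0 = 0)
    (hS1 : ∀ n : ℕ, ∀ z : ℂ,
      B (n + 1) z + B n z = (z - α n) * A n z - v0' z)
    (hS2 : ∀ n : ℕ, ∀ z : ℂ,
      1 + (z - α n) * (B (n + 1) z - B n z)
        = β (n + 1) * A (n + 1) z - β n * A (n - 1) z) :
    ∀ n : ℕ, ∀ z : ℂ,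
      (B n z) ^ 2 + v0' z * B n z + ∑ j ∈ Finset.range n, A j z
        = β n * A n z * A (n - 1) z := by
  intro n
  induction n with
  | zero => intro z; simp [hB0, hβ0]
  | succ n ih =>
    intro z
    rw [Finset.sum_range_succ]
    simp only [Nat.add_sub_cancel]
    linear_combination ih z + A n z * hS2 n z + (B (n + 1) z - B n z) * hS1 n z
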